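/- Suppose σ is strongly erasing and verifies the optimality condition. Then for every finite binary word w and every (finite or infinite) binary word u, there exist a positive integer h depending only on w, and a binary word v, such that σ^h(wv) has u as a prefix (and equals u if u is infinite). -/

import Mathlib

/-- Apply a `k`-block substitution blockwise to a finite word, dropping the
trailing partial block (the paper's truncation convention). -/
def blockApply (k : Nat) (sigma : List Bool -> List Bool) (w : List Bool) : List Bool :=
  if h : 0 < k && k <= w.length then
    sigma (w.take k) ++ blockApply k sigma (w.drop k)
  else []
termination_by w.length
decreasing_by
  simp only [Bool.and_eq_true, decide_eq_true_eq] at h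
  simp [List.length_drop]
  omega

/-- The length-`m` prefix of an infinite binary word. -/
def prefixOf (u : Nat -> Bool) (m : Nat) : List Bool := List.ofFn fun i : Fin m => u i

/-- Concatenation of the first `m` words of a sequence of finite words. -/
def concatPre (v : Nat -> List Bool) (m : Nat) : List Bool :=
  (List.ofFn fun i : Fin m => v i).flatten

/-- The optimality condition: every infinite binary word is an infinite
concatenation of nonempty images of length-`k` blocks under `sigma`. -/
def OC (k : Nat) (sigma : List Bool -> List Bool) : Prop :=
  ∀ w : Nat -> Bool, ∃ u : Nat -> List Bool,
    (∀ i, (u i).length = k ∧ sigma (u i) ≠ []) ∧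
    ∀ m, concatPre (fun i => sigma (u i)) m
        = prefixOf w (concatPre (fun i => sigma (u i)) m).length

/-- The set of `k`-roundings of a finite word `w`: extensions of `w` of length
the least multiple of `k` that is `≥ |w|`. -/
def kRound (k : Nat) (w : List Bool) : Set (List Bool) :=
  {u | ∃ v : List Bool, u = w ++ v ∧ u.length = k * ((w.length + k - 1) / k)}

/-- `wIter k sigma n w` is the set `w^[n]` of the paper: `w^[0] = {w}` and
`w^[n] = {sigma(r) : r a k-rounding of an element of w^[n-1]}`. -/
def wIter (k : Nat) (sigma : List Bool -> List Bool) : Nat -> List Bool -> Set (List Bool)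
  | 0, w => {w}
  | n + 1, w => {u | ∃ p ∈ wIter k sigma n w, ∃ r ∈ kRound k p, u = blockApply k sigma r}

theorem blockApply_small (k σ) {w : List Bool} (h : w.length < k) : blockApply k σ w = [] := by
  rw [blockApply, dif_neg]; simp; omega

theorem blockApply_nil (k σ) : blockApply k σ [] = [] := by
  rw [blockApply, dif_neg]; simp; omega

theorem blockApply_block (k σ) {b : List Bool} (rest : List Bool) (hb : b.length = k) (hk : 0 < k) :
    blockApply k σ (b ++ rest) = σ b ++ blockApply k σ rest := by
  rw [blockApply, dif_pos (by simp [hk, hb])]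
  rw [List.take_left' hb, List.drop_left' hb]

theorem blockApply_append (k σ) {a : List Bool} (b : List Bool) (hk : 0 < k)
    (hd : k ∣ a.length) : blockApply k σ (a ++ b) = blockApply k σ a ++ blockApply k σ b := by
  obtain ⟨q, hq⟩ := hd
  induction q generalizing a with
  | zero =>
    have : a = [] := by simpa using List.length_eq_zero_iff.mp (by omega)
    simp [this, blockApply_nil]
  | succ q ih =>
    rw [Nat.mul_succ] at hq
    have hta : (a.take k).length = k := by simp; omega
    have hda : (a.drop k).length = k * q := by simp; omega
    conv_lhs => rw [← List.take_append_drop k a, List.append_assoc,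
      blockApply_block k σ _ hta hk]
    rw [ih hda, ← List.take_append_drop k a, blockApply_block k σ _ hta hk,
      List.append_assoc]
    congr 1
    rw [List.take_append_drop]
    rw [List.take_append_drop]

theorem prefixOf_length (u m) : (prefixOf u m).length = m := by simp [prefixOf]

theorem prefixOf_add (u : Nat → Bool) (a b : Nat) :
    prefixOf u (a + b) = prefixOf u a ++ List.ofFn (fun i : Fin b => u (a + i)) := by
  simp [prefixOf, List.ofFn_add]

theorem prefixOf_isPrefix (u : Nat → Bool) {a b : Nat} (h : a ≤ b) :
    prefixOf u a <+: prefixOf u b := by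
  have : b = a + (b - a) := by omega
  rw [this, prefixOf_add]
  exact ⟨_, rfl⟩

theorem concatPre_succ (v : Nat → List Bool) (m : Nat) :
    concatPre v (m + 1) = concatPre v m ++ v m := by
  rw [concatPre, concatPre, List.ofFn_succ', List.concat_eq_append]
  simp [Fin.last]

theorem concatPre_length (k : Nat) {v : Nat → List Bool} (hb : ∀ i, (v i).length = k) (m : Nat) :
    (concatPre v m).length = k * m := by
  induction m with
  | zero => simp [concatPre]
  | succ m ih => rw [concatPre_succ]; simp [ih, hb]; ring

theorem concatPre_length_ge {v : Nat → List Bool} (hb : ∀ i, v i ≠ []) (m : Nat) :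
    m ≤ (concatPre v m).length := by
  induction m with
  | zero => simp
  | succ m ih =>
    rw [concatPre_succ]
    have := List.length_pos_iff.mpr (hb m)
    simp; omega

theorem blockApply_concatPre (k σ) {v : Nat → List Bool} (hk : 0 < k)
    (hb : ∀ i, (v i).length = k) (m : Nat) :
    blockApply k σ (concatPre v m) = concatPre (fun i => σ (v i)) m := by
  induction m with
  | zero => simp [concatPre, blockApply_nil]
  | succ m ih =>
    rw [concatPre_succ, blockApply_append k σ _ hk ⟨m, by rw [concatPre_length k hb]⟩,
      ih, concatPre_succ]
    congr 1
    rw [← List.append_nil (v m), blockApply_block k σ _ (hb m) hk, blockApply_nil,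
      List.append_nil, List.append_nil]

def blockStream (k : Nat) (b : Nat → List Bool) : Nat → Bool :=
  fun j => (b (j / k)).getD (j % k) false

theorem prefixOf_blockStream (k : Nat) {b : Nat → List Bool} (hk : 0 < k)
    (hb : ∀ i, (b i).length = k) (s : Nat) :
    prefixOf (blockStream k b) (k * s) = concatPre b s := by
  induction s with
  | zero => simp [prefixOf, concatPre]
  | succ s ih =>
    rw [Nat.mul_succ, prefixOf_add, ih, concatPre_succ]
    congr 1
    apply List.ext_getElem
    · simp [hb]
    · intro i h1 h2
      simp only [List.getElem_ofFn, blockStream]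
      have hik : i < k := by simpa using h1
      rw [Nat.mul_add_div hk, Nat.mul_add_mod]
      rw [Nat.div_eq_of_lt hik, Nat.mod_eq_of_lt hik]
      simp [List.getElem?_eq_getElem h2]

def listAppend (e : List Bool) (V : Nat → Bool) : Nat → Bool :=
  fun j => if h : j < e.length then e[j] else V (j - e.length)

theorem prefixOf_listAppend (e : List Bool) (V : Nat → Bool) (t : Nat) :
    prefixOf (listAppend e V) (e.length + t) = e ++ prefixOf V t := by
  apply List.ext_getElem
  · simp [prefixOf]
  · intro i h1 h2
    simp only [prefixOf, List.getElem_ofFn, List.getElem_append, listAppend]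

theorem blockApply_prefixOf_trunc (k σ) (W : Nat → Bool) (t : Nat) (hk : 0 < k) :
    blockApply k σ (prefixOf W t) = blockApply k σ (prefixOf W (k * (t / k))) := by
  conv_lhs => rw [← Nat.div_add_mod t k, prefixOf_add,
    blockApply_append k σ _ hk ⟨t / k, by simp [prefixOf_length]⟩]
  rw [blockApply_small k σ (w := List.ofFn fun i : Fin (t % k) => W (k * (t / k) + ↑i))
    (by simpa using Nat.mod_lt t hk), List.append_nil]

theorem list_eq_prefixOf_getD (u : List Bool) :
    u = prefixOf (fun j => u.getD j false) u.length := by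
  apply List.ext_getElem
  · simp [prefixOf]
  · intro i h1 h2
    simp [prefixOf, List.getD_eq_getElem _ _ h1]

theorem main_reach (k : Nat) (σ : List Bool → List Bool) (hk : 0 < k) (hOC : OC k σ) :
    ∀ (n : Nat) (w x : List Bool), x ∈ wIter k σ n w → ∀ u : Nat → Bool,
    ∃ V : Nat → Bool, ∀ m : Nat, ∃ t : Nat,
      (blockApply k σ)^[n] (w ++ prefixOf V t)
        = x ++ prefixOf u (((blockApply k σ)^[n] (w ++ prefixOf V t)).length - x.length) ∧
      m ≤ ((blockApply k σ)^[n] (w ++ prefixOf V t)).length - x.length := by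
  intro n
  induction n with
  | zero =>
    intro w x hx u
    simp only [wIter, Set.mem_singleton_iff] at hx
    subst hx
    exact ⟨u, fun m => ⟨m, by simp [prefixOf_length], by simp [prefixOf_length]⟩⟩
  | succ n ih =>
    intro w x hx u
    obtain ⟨p, hp, r, hr, rfl⟩ := hx
    obtain ⟨e, he, hrl⟩ := hr
    obtain ⟨b, hb, hbc⟩ := hOC u
    set W := blockStream k b with hW
    obtain ⟨V, hV⟩ := ih w p hp (listAppend e W)
    refine ⟨V, fun m => ?_⟩
    obtain ⟨t, h1, h2⟩ := hV (e.length + k * m)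
    refine ⟨t, ?_⟩
    set res := (blockApply k σ)^[n] (w ++ prefixOf V t) with hres
    set L := res.length - p.length with hL
    set t' := L - e.length with ht'
    have htk : k * m ≤ t' := by omega
    have hLe : L = e.length + t' := by omega
    rw [hLe, prefixOf_listAppend] at h1
    set q := t' / k with hq
    have hmq : m ≤ q := by
      rw [hq, Nat.le_div_iff_mul_le hk, Nat.mul_comm]; exact htk
    have key : (blockApply k σ)^[n+1] (w ++ prefixOf V t)
        = blockApply k σ r ++ concatPre (fun i => σ (b i)) q := by
      rw [Function.iterate_succ_apply', ← hres, h1, ← List.append_assoc, ← he,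
        blockApply_append k σ _ hk ⟨(p.length + k - 1) / k, hrl⟩,
        blockApply_prefixOf_trunc k σ W t' hk, ← hq,
        prefixOf_blockStream k hk (fun i => (hb i).1) q,
        blockApply_concatPre k σ hk (fun i => (hb i).1) q]
    have hlen : ((blockApply k σ)^[n+1] (w ++ prefixOf V t)).length
        - (blockApply k σ r).length = (concatPre (fun i => σ (b i)) q).length := by
      rw [key]; simp
    constructor
    · rw [hlen, key, ← hbc q]
    · rw [hlen]
      exact le_trans hmq (concatPre_length_ge (fun i => (hb i).2) q)

theorem nil_mem_wIter_succ (k : Nat) (σ : List Bool → List Bool) (hk : 2 ≤ k)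
    {n : Nat} {w : List Bool} (h : [] ∈ wIter k σ n w) : [] ∈ wIter k σ (n + 1) w := by
  refine ⟨[], h, [], ⟨[], rfl, ?_⟩, (blockApply_nil k σ).symm⟩
  have h0 : (k - 1) / k = 0 := Nat.div_eq_of_lt (by omega)
  simp [h0]

/-- if `sigma` is strongly erasing and satisfies the optimality
condition then for every finite word `w` there is `h > 0` (depending only on
`w`) such that: every finite word `u` is a prefix of `sigma^h(wv)` for some
finite extension `v`, and every infinite word `u` equals `sigma^h(wv)` for some
infinite extension `v` (in the sense that the iterated images of the finite
prefixes of `wv` are exactly the prefixes of `u`, of unbounded length). -/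
theorem strongly_erasing_reach_any_prefix
    (k : Nat) (sigma : List Bool -> List Bool) (weps : List Bool)
    (hk : 2 ≤ k) (hlen : weps.length = k)
    (hne1 : weps ≠ List.replicate k true)
    (herase : ∀ w : List Bool, w.length = k → (sigma w = [] ↔ w = weps))
    (hSE : ∀ w : List Bool, ∃ n : Nat, [] ∈ wIter k sigma n w)
    (hOC : OC k sigma) :
    ∀ w : List Bool, ∃ h : Nat, 0 < h ∧
      (∀ u : List Bool, ∃ v : List Bool, u <+: (blockApply k sigma)^[h] (w ++ v)) ∧
      (∀ u : Nat -> Bool, ∃ v : Nat -> Bool, ∀ m : Nat, ∃ l : Nat,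
        m ≤ ((blockApply k sigma)^[h] (w ++ prefixOf v l)).length ∧
        (blockApply k sigma)^[h] (w ++ prefixOf v l)
          = prefixOf u ((blockApply k sigma)^[h] (w ++ prefixOf v l)).length) := by
  intro w
  have hk0 : 0 < k := by omega
  obtain ⟨n, hn⟩ := hSE w
  have hn' : [] ∈ wIter k sigma (n + 1) w := nil_mem_wIter_succ k sigma hk hn
  refine ⟨n + 1, Nat.succ_pos n, ?_, ?_⟩
  · intro u
    obtain ⟨V, hV⟩ := main_reach k sigma hk0 hOC (n + 1) w [] hn'
      (fun j => u.getD j false)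
    obtain ⟨t, h1, h2⟩ := hV u.length
    refine ⟨prefixOf V t, ?_⟩
    simp only [List.nil_append, List.length_nil, Nat.sub_zero] at h1 h2
    rw [h1]
    conv_lhs => rw [list_eq_prefixOf_getD u]
    exact prefixOf_isPrefix _ h2
  · intro u
    obtain ⟨V, hV⟩ := main_reach k sigma hk0 hOC (n + 1) w [] hn' u
    refine ⟨V, fun m => ?_⟩
    obtain ⟨t, h1, h2⟩ := hV m
    simp only [List.nil_append, List.length_nil, Nat.sub_zero] at h1 h2
    exact ⟨t, h2, h1⟩
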